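/- arXiv:1307.2076 — 4 statements merged into one kernel-verified Lean document; each statement's English description precedes it below -/
import Mathlib

section
/- Let K be a totally real number field of degree s, U the group of units of an order O in K, with fundamental units η_1,...,η_{s-1}. Set c_0 = exp(Σ_{i,j < s} |ln|σ_i(η_j)||) (summed over 1 ≤ i,j ≤ s-1). Then for any y_1,...,y_s > 0 with y = y_1···y_s, there exists a unit η ∈ U such that y_i · y^{-1/s} · |σ_i(η)| ∈ [1/c_0, c_0] for all i = 1,...,s. -/
open Finset

private lemma aux_round (m : ℕ) (M : Matrix (Fin (m+1)) (Fin (m+1)) ℝ)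
    (hdet : M.det ≠ 0)
    (z : Fin (m+2) → ℝ) (hz : ∑ i, z i = 0)
    (c : Fin (m+2) → Fin (m+1) → ℝ)
    (hc : ∀ i j, M i j = c (Fin.castSucc i) j)
    (hcsum : ∀ j, ∑ i, c i j = 0) :
    ∃ a : Fin (m+1) → ℤ, ∀ i, |z i + ∑ j, (a j : ℝ) * c i j| ≤ ∑ i', ∑ j, |M i' j| := by
  have hM : IsUnit M.det := isUnit_iff_ne_zero.mpr hdet
  set b : Fin (m+1) → ℝ := M⁻¹.mulVec (fun i => -z (Fin.castSucc i)) with hbdef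
  have hb : M.mulVec b = fun i => -z (Fin.castSucc i) := by
    rw [hbdef, Matrix.mulVec_mulVec, Matrix.mul_nonsing_inv _ hM, Matrix.one_mulVec]
  set a : Fin (m+1) → ℤ := fun j => round (b j) with hadef
  set S : ℝ := ∑ i', ∑ j, |M i' j| with hSdef
  have hS0 : 0 ≤ S := Finset.sum_nonneg fun i _ => Finset.sum_nonneg fun j _ => abs_nonneg _
  have hrowS : ∀ i, ∑ j, |M i j| ≤ S := fun i =>
    Finset.single_le_sum (f := fun i => ∑ j, |M i j|)
      (fun k _ => Finset.sum_nonneg fun j _ => abs_nonneg _) (Finset.mem_univ i)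
  have hrow : ∀ i : Fin (m+1),
      |z (Fin.castSucc i) + ∑ j, (a j : ℝ) * c (Fin.castSucc i) j| ≤ (∑ j, |M i j|) / 2 := by
    intro i
    have h1 : ∑ j, M i j * b j = -z (Fin.castSucc i) := by
      have h := congrFun hb i
      simpa [Matrix.mulVec, dotProduct] using h
    have h2 : z (Fin.castSucc i) + ∑ j, (a j : ℝ) * c (Fin.castSucc i) j
        = ∑ j, ((a j : ℝ) - b j) * M i j := by
      have hcc : ∑ j, (a j : ℝ) * c (Fin.castSucc i) j = ∑ j, (a j : ℝ) * M i j :=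
        Finset.sum_congr rfl fun j _ => by rw [hc]
      have h3 : ∑ j, ((a j : ℝ) - b j) * M i j
          = ∑ j, (a j : ℝ) * M i j - ∑ j, b j * M i j := by
        rw [← Finset.sum_sub_distrib]
        exact Finset.sum_congr rfl fun j _ => by ring
      have h4 : ∑ j, b j * M i j = -z (Fin.castSucc i) := by
        rw [← h1]; exact Finset.sum_congr rfl fun j _ => mul_comm _ _
      rw [hcc, h3, h4]; ring
    rw [h2]
    calc |∑ j, ((a j : ℝ) - b j) * M i j| ≤ ∑ j, |((a j : ℝ) - b j) * M i j| :=
          Finset.abs_sum_le_sum_abs _ _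
      _ ≤ ∑ j, (1/2) * |M i j| := by
          refine Finset.sum_le_sum fun j _ => ?_
          rw [abs_mul]
          refine mul_le_mul_of_nonneg_right ?_ (abs_nonneg _)
          calc |(a j : ℝ) - b j| = |b j - round (b j)| := by rw [hadef, abs_sub_comm]
            _ ≤ 1/2 := abs_sub_round (b j)
      _ = (∑ j, |M i j|) / 2 := by rw [← Finset.mul_sum]; ring
  refine ⟨a, fun i => ?_⟩
  have htotsum : ∑ i, (z i + ∑ j, (a j : ℝ) * c i j) = 0 := by
    rw [Finset.sum_add_distrib, hz, Finset.sum_comm]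
    simp [← Finset.mul_sum, hcsum]
  rcases lt_or_ge (i : ℕ) (m+1) with hi | hi
  · have hii : i = Fin.castSucc ⟨i.1, hi⟩ := by ext; rfl
    rw [hii]
    calc |z (Fin.castSucc ⟨i.1, hi⟩) + ∑ j, (a j : ℝ) * c (Fin.castSucc ⟨i.1, hi⟩) j|
        ≤ (∑ j, |M ⟨i.1, hi⟩ j|) / 2 := hrow _
      _ ≤ S := by have := hrowS ⟨i.1, hi⟩; linarith
  · have hlast : i = Fin.last (m+1) := Fin.ext (by rw [Fin.val_last]; omega)
    have hsum := Fin.sum_univ_castSucc (f := fun i : Fin (m+2) => z i + ∑ j, (a j : ℝ) * c i j)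
    rw [htotsum] at hsum
    have hsplit : z i + ∑ j, (a j : ℝ) * c i j
        = -∑ k : Fin (m+1), (z (Fin.castSucc k) + ∑ j, (a j : ℝ) * c (Fin.castSucc k) j) := by
      rw [hlast]; linarith [hsum]
    rw [hsplit, abs_neg]
    calc |∑ k : Fin (m+1), (z (Fin.castSucc k) + ∑ j, (a j : ℝ) * c (Fin.castSucc k) j)|
        ≤ ∑ k, |z (Fin.castSucc k) + ∑ j, (a j : ℝ) * c (Fin.castSucc k) j| :=
          Finset.abs_sum_le_sum_abs _ _
      _ ≤ ∑ k, (∑ j, |M k j|) / 2 := Finset.sum_le_sum fun k _ => hrow k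
      _ = S / 2 := by rw [← Finset.sum_div, hSdef]
      _ ≤ S := by linarith

/-- Dirichlet-type rescaling lemma: if `η_1,…,η_{s-1}` are fundamental units of an
order `O` of a totally real field `K` of degree `s` (each of norm `±1`, with the
`(s-1)×(s-1)` matrix of logarithms nonsingular) and
`c₀ = exp(∑_{i,j<s} |log |σ_i(η_j)||)`, then for any positive reals `y_1,…,y_s`
with `y = y_1⋯y_s` there is a unit `η ∈ Oˣ` such that
`y_i · y^{-1/s} · |σ_i(η)| ∈ [1/c₀, c₀]` for all `i`. -/
theorem exists_unit_rescaling
    (K : Type*) [Field K] [NumberField K]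
    (s : ℕ) (hs : 2 ≤ s) (e : Fin s ≃ (K →+* ℝ))
    (O : Subalgebra ℤ K) (η : Fin (s - 1) → Oˣ)
    (hnorm : ∀ j, |∏ i : Fin s, e i (((η j : O) : K))| = 1)
    (hdet : (Matrix.of fun i j : Fin (s - 1) =>
        Real.log (abs (e (Fin.castLE (Nat.sub_le s 1) i) (((η j : O) : K))))).det ≠ 0)
    (c₀ : ℝ)
    (hc₀ : c₀ = Real.exp (∑ i : Fin (s - 1), ∑ j : Fin (s - 1),
        |Real.log (abs (e (Fin.castLE (Nat.sub_le s 1) i) (((η j : O) : K))))|))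
    (y : Fin s → ℝ) (hy : ∀ i, 0 < y i) :
    ∃ u : Oˣ, (∃ a : Fin (s - 1) → ℤ, u = ∏ j, (η j) ^ (a j)) ∧
      ∀ i : Fin s,
        y i * (∏ k, y k) ^ (-(1 : ℝ) / s) * |e i (((u : O) : K))|
          ∈ Set.Icc c₀⁻¹ c₀ := by
  obtain ⟨m, rfl⟩ : ∃ m, s = m + 2 := ⟨s - 2, by omega⟩
  have hP : 0 < ∏ k, y k := Finset.prod_pos fun k _ => hy k
  have hyP : ∀ i, 0 < y i * (∏ k, y k) ^ (-(1 : ℝ) / ((m+2 : ℕ) : ℝ)) := fun i =>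
    mul_pos (hy i) (Real.rpow_pos_of_pos hP _)
  set z : Fin (m+2) → ℝ :=
    fun i => Real.log (y i * (∏ k, y k) ^ (-(1 : ℝ) / ((m+2 : ℕ) : ℝ))) with hzdef
  -- sum of z is zero
  have hzsum : ∑ i, z i = 0 := by
    have h1 : ∀ i : Fin (m+2), z i
        = Real.log (y i) + (-(1 : ℝ) / ((m+2 : ℕ) : ℝ)) * Real.log (∏ k, y k) := fun i => by
      simp only [hzdef]
      rw [Real.log_mul (hy i).ne' (Real.rpow_pos_of_pos hP _).ne', Real.log_rpow hP]
    rw [Finset.sum_congr rfl fun i _ => h1 i, Finset.sum_add_distrib,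
      ← Real.log_prod (fun i _ => (hy i).ne'), Finset.sum_const, Finset.card_univ,
      Fintype.card_fin, nsmul_eq_mul]
    have hm : ((m+2 : ℕ) : ℝ) ≠ 0 := by positivity
    field_simp
    ring
  -- embeddings of units are nonzero, with multiplicative structure
  have hG : ∀ (i : Fin (m+2)) (w : Oˣ),
      ((Units.map ((e i).comp (Subalgebra.val O).toRingHom).toMonoidHom w : ℝˣ) : ℝ)
        = e i ((w : O) : K) := fun i w => rfl
  have hne : ∀ (i : Fin (m+2)) (w : Oˣ), e i ((w : O) : K) ≠ 0 := fun i w => by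
    rw [← hG]; exact Units.ne_zero _
  have hL : ∀ (aa : Fin (m+1) → ℤ) (i : Fin (m+2)),
      Real.log (e i (((∏ j, η j ^ aa j : Oˣ) : O) : K))
        = ∑ j, (aa j : ℝ) * Real.log (e i (((η j : O) : K))) := by
    intro aa i
    rw [← hG, map_prod]
    rw [← Units.coeHom_apply, map_prod]
    simp only [map_zpow, Units.coeHom_apply, Units.val_zpow_eq_zpow_val]
    rw [Real.log_prod (fun j _ => zpow_ne_zero _ (Units.ne_zero _))]
    simp only [Real.log_zpow]
    exact Finset.sum_congr rfl fun j _ => by rw [hG]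
  have hcsum : ∀ j, ∑ i : Fin (m+2), Real.log (e i (((η j : O) : K))) = 0 := by
    intro j
    rw [← Real.log_prod (fun i _ => hne i (η j)), ← Real.log_abs, hnorm j, Real.log_one]
  -- apply the rounding lemma
  obtain ⟨a, ha⟩ := aux_round m
    (Matrix.of fun i j : Fin (m + 2 - 1) =>
      Real.log (abs (e (Fin.castLE (Nat.sub_le (m+2) 1) i) (((η j : O) : K)))))
    hdet z hzsum (fun i j => Real.log (e i (((η j : O) : K))))
    (fun i j => by
      show Real.log (abs (e (Fin.castLE (Nat.sub_le (m+2) 1) i) (((η j : O) : K)))) = _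
      rw [Real.log_abs]; rfl)
    hcsum
  refine ⟨∏ j, η j ^ a j, ⟨a, rfl⟩, fun i => ?_⟩
  have hterm : y i * (∏ k, y k) ^ (-(1 : ℝ) / ((m+2 : ℕ) : ℝ))
      * |e i (((∏ j, η j ^ a j : Oˣ) : O) : K)|
      = Real.exp (z i + ∑ j, (a j : ℝ) * Real.log (e i (((η j : O) : K)))) := by
    rw [Real.exp_add]
    congr 1
    · exact (Real.exp_log (hyP i)).symm
    · rw [← hL a i, ← Real.log_abs, Real.exp_log (abs_pos.mpr (hne i _))]
  have hSle := ha i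
  have hc₀' : c₀ = Real.exp (∑ i' : Fin (m + 2 - 1), ∑ j,
      |(Matrix.of fun i j : Fin (m + 2 - 1) =>
        Real.log (abs (e (Fin.castLE (Nat.sub_le (m+2) 1) i) (((η j : O) : K))))) i' j|) := by
    rw [hc₀]; rfl
  rw [hterm, Set.mem_Icc, hc₀', ← Real.exp_neg]
  exact ⟨Real.exp_le_exp.mpr (neg_le_of_abs_le hSle), Real.exp_le_exp.mpr (le_of_abs_le hSle)⟩
end

section
/- Let Γ ⊂ ℝ^s be a lattice with |Nm(γ)| ≥ c^s for all nonzero γ ∈ Γ (where Nm(x) = x_1···x_s and c > 0), and let B be a box of the form Π_{i<s}(κ_i 2^{m_i}, κ_i 2^{m_i+1}] × (j κ_s 2^{-m_1-···-m_{s-1}} c^s, (j+1) κ_s 2^{-m_1-···-m_{s-1}} c^s] with κ_i ∈ {-1,1}, m_i ∈ Z, j ≥ 0 an integer. Then B contains at most one point of Γ. -/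
private lemma two_zpow_sum {ι : Type*} (S : Finset ι) (f : ι → ℤ) :
    (2 : ℝ) ^ (∑ i ∈ S, f i) = ∏ i ∈ S, (2 : ℝ) ^ (f i) := by
  classical
  induction S using Finset.induction with
  | empty => simp
  | insert _ _ h ih =>
      rw [Finset.sum_insert h, Finset.prod_insert h,
        zpow_add₀ (by norm_num : (2 : ℝ) ≠ 0), ih]

private lemma abs_sub_lt_of_Ioc {a b x y : ℝ} (ha : a ∈ Set.Ioc x y)
    (hb : b ∈ Set.Ioc x y) : |a - b| < y - x := by
  rw [abs_sub_lt_iff]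
  constructor <;> [skip; skip] <;>
    · have := ha.1; have := ha.2; have := hb.1; have := hb.2; linarith

/-- An admissible lattice `Γ ⊂ ℝ^{s+1}` (with `|Nm γ| ≥ c^{s+1}` for nonzero `γ`)
meets each box `∏_{i<s} κ_i·(2^{m_i}, 2^{m_i+1}] × κ_s·(j·2^{-∑m}c^{s+1}, (j+1)·2^{-∑m}c^{s+1}]`
in at most one point. -/
theorem admissible_lattice_box_at_most_one_point
    (s : ℕ) (Γ : AddSubgroup (Fin (s + 1) → ℝ)) (c : ℝ) (hc : 0 < c)
    (hadm : ∀ γ ∈ Γ, γ ≠ 0 → c ^ (s + 1) ≤ |∏ i, γ i|)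
    (m : Fin s → ℤ) (κ : Fin (s + 1) → ℝ) (hκ : ∀ i, κ i = 1 ∨ κ i = -1)
    (j : ℕ) (v w : Fin (s + 1) → ℝ) (hv : v ∈ Γ) (hw : w ∈ Γ)
    (hvB : (∀ i : Fin s, κ i.castSucc * v i.castSucc ∈
        Set.Ioc ((2 : ℝ) ^ (m i)) ((2 : ℝ) ^ (m i + 1))) ∧
      κ (Fin.last s) * v (Fin.last s) ∈
        Set.Ioc ((j : ℝ) * (2 : ℝ) ^ (-∑ i, m i) * c ^ (s + 1))
          (((j : ℝ) + 1) * (2 : ℝ) ^ (-∑ i, m i) * c ^ (s + 1)))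
    (hwB : (∀ i : Fin s, κ i.castSucc * w i.castSucc ∈
        Set.Ioc ((2 : ℝ) ^ (m i)) ((2 : ℝ) ^ (m i + 1))) ∧
      κ (Fin.last s) * w (Fin.last s) ∈
        Set.Ioc ((j : ℝ) * (2 : ℝ) ^ (-∑ i, m i) * c ^ (s + 1))
          (((j : ℝ) + 1) * (2 : ℝ) ^ (-∑ i, m i) * c ^ (s + 1))) :
    v = w := by
  by_contra hne
  have hγmem : v - w ∈ Γ := sub_mem hv hw
  have hγ0 : v - w ≠ 0 := sub_ne_zero.mpr hne
  have hle := hadm _ hγmem hγ0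
  set t : ℝ := (2 : ℝ) ^ (-∑ i, m i) * c ^ (s + 1) with ht
  have ht0 : 0 < t := mul_pos (zpow_pos (by norm_num) _) (pow_pos hc _)
  have hκabs : ∀ i, |κ i| = 1 := by
    intro i; rcases hκ i with h | h <;> simp [h]
  have habs : ∀ i, |(v - w) i| = |κ i * v i - κ i * w i| := by
    intro i
    rw [← mul_sub, abs_mul, hκabs i, one_mul, Pi.sub_apply]
  -- bounds on coordinates of the difference
  have h1 : ∀ i : Fin s, |(v - w) i.castSucc| < (2 : ℝ) ^ (m i) := by
    intro i
    rw [habs]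
    have := abs_sub_lt_of_Ioc (hvB.1 i) (hwB.1 i)
    have h2m : (2 : ℝ) ^ (m i + 1) = 2 ^ (m i) * 2 :=
      zpow_add_one₀ (by norm_num) _
    calc |κ i.castSucc * v i.castSucc - κ i.castSucc * w i.castSucc|
        < (2 : ℝ) ^ (m i + 1) - 2 ^ (m i) := this
      _ = (2 : ℝ) ^ (m i) := by rw [h2m]; ring
  have h2 : |(v - w) (Fin.last s)| < t := by
    rw [habs]
    have := abs_sub_lt_of_Ioc hvB.2 hwB.2
    calc |κ (Fin.last s) * v (Fin.last s) - κ (Fin.last s) * w (Fin.last s)|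
        < ((j : ℝ) + 1) * (2 : ℝ) ^ (-∑ i, m i) * c ^ (s + 1)
          - (j : ℝ) * (2 : ℝ) ^ (-∑ i, m i) * c ^ (s + 1) := this
      _ = t := by rw [ht]; ring
  -- multiply the bounds
  have hQpos : (0 : ℝ) < ∏ i : Fin s, (2 : ℝ) ^ (m i) :=
    Finset.prod_pos fun i _ => zpow_pos (by norm_num) _
  have hP : ∏ i : Fin s, |(v - w) i.castSucc| ≤ ∏ i : Fin s, (2 : ℝ) ^ (m i) :=
    Finset.prod_le_prod (fun i _ => abs_nonneg _) (fun i _ => (h1 i).le)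
  have hprod : |∏ i, (v - w) i| < c ^ (s + 1) := by
    rw [Finset.abs_prod, Fin.prod_univ_castSucc]
    calc (∏ i : Fin s, |(v - w) i.castSucc|) * |(v - w) (Fin.last s)|
        ≤ (∏ i : Fin s, (2 : ℝ) ^ (m i)) * |(v - w) (Fin.last s)| :=
          mul_le_mul_of_nonneg_right hP (abs_nonneg _)
      _ < (∏ i : Fin s, (2 : ℝ) ^ (m i)) * t :=
          (mul_lt_mul_iff_right₀ hQpos).mpr h2
      _ = c ^ (s + 1) := by
          rw [ht, ← two_zpow_sum, ← mul_assoc,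
            ← zpow_add₀ (by norm_num : (2 : ℝ) ≠ 0)]
          simp
  linarith
end

section
/- Let Γ ⊂ ℝ^s be a lattice with |Nm(γ)| ≥ c^s for all nonzero γ ∈ Γ, and let N_1,...,N_s > 0 with N = N_1···N_s. Then for τ = N^{-2} and N sufficiently large, the box [0, N_1+τ) × ··· × [0, N_s+τ) minus the box [0, N_1-τ) × ··· × [0, N_s-τ) is a union of 2^s - 1 boxes each of volume less than c^s, so each translate of each such box contains at most one point of Γ; consequently the number of points of Γ + x in the outer box minus the number in the inner box is at most 2^s - 1, for every x ∈ ℝ^s. -/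
/-- For an admissible lattice `Γ` (with `|Nm γ| ≥ c^s` for nonzero `γ ∈ Γ`), positive
sides `N_1,…,N_s`, `τ = (N_1⋯N_s)^{-2}`, and `N` large enough that
`∏(N_i+τ) − ∏(N_i−τ) < c^s` and `τ < N_i`, the set of points of `Γ + x` lying in the
outer box `∏ [0, N_i+τ)` but not in the inner box `∏ [0, N_i−τ)` is finite of
cardinality at most `2^s − 1`, for every `x`. -/
theorem lattice_points_outer_minus_inner
    (s : ℕ) (Γ : AddSubgroup (Fin s → ℝ)) (c : ℝ) (hc : 0 < c)
    (hadm : ∀ γ ∈ Γ, γ ≠ 0 → c ^ s ≤ |∏ i, γ i|)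
    (N : Fin s → ℝ) (hN : ∀ i, 0 < N i)
    (τ : ℝ) (hτ : τ = ((∏ i, N i) ^ 2)⁻¹)
    (hτN : ∀ i, τ < N i)
    (hvol : (∏ i, (N i + τ)) - (∏ i, (N i - τ)) < c ^ s)
    (x : Fin s → ℝ) :
    ({v : Fin s → ℝ | v ∈ Γ ∧
        (v + x) ∈ Set.univ.pi (fun i => Set.Ico 0 (N i + τ)) ∧
        (v + x) ∉ Set.univ.pi (fun i => Set.Ico 0 (N i - τ))}).Finite ∧
    ({v : Fin s → ℝ | v ∈ Γ ∧
        (v + x) ∈ Set.univ.pi (fun i => Set.Ico 0 (N i + τ)) ∧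
        (v + x) ∉ Set.univ.pi (fun i => Set.Ico 0 (N i - τ))}).ncard ≤ 2 ^ s - 1 := by
  classical
  set A := {v : Fin s → ℝ | v ∈ Γ ∧
        (v + x) ∈ Set.univ.pi (fun i => Set.Ico 0 (N i + τ)) ∧
        (v + x) ∉ Set.univ.pi (fun i => Set.Ico 0 (N i - τ))} with hA
  have hprodN : 0 < ∏ i, N i := Finset.prod_pos fun i _ => hN i
  have hτpos : 0 < τ := by rw [hτ]; positivity
  -- the subset selector
  set S : (Fin s → ℝ) → Finset (Fin s) :=
    fun v => Finset.univ.filter (fun i => N i - τ ≤ (v + x) i) with hSdef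
  have hmem : ∀ v ∈ A, (S v).Nonempty := by
    intro v hv
    obtain ⟨hvΓ, hout, hin⟩ := hv
    rw [Set.mem_pi] at hin
    push_neg at hin
    obtain ⟨i, -, hi⟩ := hin
    have h0 : 0 ≤ (v + x) i := (hout i (Set.mem_univ i)).1
    refine ⟨i, ?_⟩
    simp only [hSdef, Finset.mem_filter, Finset.mem_univ, true_and]
    by_contra h
    push_neg at h
    exact hi ⟨h0, h⟩
  -- each of the boundary boxes has volume < c^s
  have hside : ∀ T : Finset (Fin s), T.Nonempty →
      (∏ _i ∈ T, (2 * τ)) * ∏ i ∈ Finset.univ \ T, (N i - τ) < c ^ s := by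
    intro T hT
    have hexp : (∏ i, (N i + τ)) =
        ∑ U ∈ (Finset.univ : Finset (Fin s)).powerset,
          (∏ _i ∈ U, (2 * τ)) * ∏ i ∈ Finset.univ \ U, (N i - τ) := by
      have h2 : ∀ i : Fin s, N i + τ = 2 * τ + (N i - τ) := fun i => by ring
      calc (∏ i, (N i + τ)) = ∏ i, (2 * τ + (N i - τ)) := by
            exact Finset.prod_congr rfl fun i _ => h2 i
        _ = _ := Finset.prod_add _ _ _
    have hnn : ∀ U ∈ (Finset.univ : Finset (Fin s)).powerset,
        0 ≤ (∏ _i ∈ U, (2 * τ)) * ∏ i ∈ Finset.univ \ U, (N i - τ) := by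
      intro U _
      apply mul_nonneg
      · exact Finset.prod_nonneg fun i _ => by linarith
      · exact Finset.prod_nonneg fun i _ => by linarith [hτN i]
    have hne : T ≠ (∅ : Finset (Fin s)) := hT.ne_empty
    have hpair : ({T, ∅} : Finset (Finset (Fin s))) ⊆ (Finset.univ : Finset (Fin s)).powerset := by
      intro U hU
      simp
    have hsum : (∏ _i ∈ T, (2 * τ)) * (∏ i ∈ Finset.univ \ T, (N i - τ))
          + (∏ _i ∈ (∅ : Finset (Fin s)), (2 * τ)) * (∏ i ∈ Finset.univ \ (∅ : Finset (Fin s)), (N i - τ))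
        ≤ ∑ U ∈ (Finset.univ : Finset (Fin s)).powerset,
            (∏ _i ∈ U, (2 * τ)) * ∏ i ∈ Finset.univ \ U, (N i - τ) := by
      have := Finset.sum_le_sum_of_subset_of_nonneg hpair fun U hU _ => hnn U hU
      rwa [Finset.sum_pair hne] at this
    simp only [Finset.prod_empty, one_mul, Finset.sdiff_empty] at hsum
    rw [← hexp] at hsum
    linarith
  -- injectivity of the selector on A
  have hinj : Set.InjOn S A := by
    intro v1 h1 v2 h2 hSe
    by_contra hne
    have hγ : v1 - v2 ∈ Γ := sub_mem h1.1 h2.1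
    have hγ0 : v1 - v2 ≠ 0 := sub_ne_zero.mpr hne
    have hb := hadm _ hγ hγ0
    have habs : ∀ i, |(v1 - v2) i| < (if i ∈ S v1 then 2 * τ else N i - τ) := by
      intro i
      have e1 : (v1 - v2) i = (v1 + x) i - (v2 + x) i := by
        simp only [Pi.sub_apply, Pi.add_apply]; ring
      have u1 : (v1 + x) i < N i + τ := (h1.2.1 i (Set.mem_univ i)).2
      have u2 : (v2 + x) i < N i + τ := (h2.2.1 i (Set.mem_univ i)).2
      have l1 : 0 ≤ (v1 + x) i := (h1.2.1 i (Set.mem_univ i)).1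
      have l2 : 0 ≤ (v2 + x) i := (h2.2.1 i (Set.mem_univ i)).1
      rw [e1, abs_sub_lt_iff]
      split_ifs with hi
      · have hi2 : i ∈ S v2 := hSe ▸ hi
        simp only [hSdef, Finset.mem_filter, Finset.mem_univ, true_and] at hi hi2
        constructor <;> linarith
      · have hi2 : i ∉ S v2 := hSe ▸ hi
        simp only [hSdef, Finset.mem_filter, Finset.mem_univ, true_and, not_le] at hi hi2
        constructor <;> linarith
    have hlt : |∏ i, (v1 - v2) i| < c ^ s := by
      rw [Finset.abs_prod]
      calc (∏ i, |(v1 - v2) i|)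
          ≤ ∏ i, (if i ∈ S v1 then 2 * τ else N i - τ) :=
            Finset.prod_le_prod (fun i _ => abs_nonneg _) (fun i _ => (habs i).le)
        _ = (∏ _i ∈ S v1, (2 * τ)) * ∏ i ∈ Finset.univ \ S v1, (N i - τ) := by
            rw [Finset.prod_ite]
            congr 1
            · apply Finset.prod_congr
              · ext i; simp
              · intros; rfl
            · apply Finset.prod_congr
              · ext i; simp
              · intros; rfl
        _ < c ^ s := hside _ (hmem v1 h1)
    linarith
  have hfin : A.Finite := Set.Finite.of_finite_image (Set.toFinite _) hinj
  refine ⟨hfin, ?_⟩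
  have h1 : A.ncard = (S '' A).ncard := (Set.ncard_image_of_injOn hinj).symm
  have hsub : S '' A ⊆ {T : Finset (Fin s) | T ≠ ∅} := by
    rintro _ ⟨v, hv, rfl⟩
    exact (hmem v hv).ne_empty
  have h2 : (S '' A).ncard ≤ ({T : Finset (Fin s) | T ≠ ∅} : Set _).ncard :=
    Set.ncard_le_ncard hsub (Set.toFinite _)
  have h3 : ({T : Finset (Fin s) | T ≠ ∅} : Set _).ncard = 2 ^ s - 1 := by
    have he : ({T : Finset (Fin s) | T ≠ ∅} : Set _) = Set.univ \ {∅} := by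
      ext T; simp
    rw [he, Set.ncard_diff_singleton_of_mem (Set.mem_univ _), Set.ncard_univ]
    simp [Nat.card_eq_fintype_card, Fintype.card_finset]
  omega
end

section
/- Let Γ^⊥ ⊂ ℝ^s be a lattice with determinant D and |Nm(γ)| ≥ c^s for all nonzero γ ∈ Γ^⊥, and fix integers m_1,...,m_s with m_1 + ··· + m_s = 0, q = 2 + ⌊D/c^s⌋. Then by Minkowski's convex body theorem, the box Π_{i=1}^{s-1}[-q^{m_i}, q^{m_i}] × [-D q^{m_s}, D q^{m_s}] contains a nonzero point γ ∈ Γ^⊥ with |Nm(γ)| ≤ D, and moreover |γ_i| > q^{m_i - 1} for each i = 1,...,s-1. -/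
open MeasureTheory Finset

lemma prod_zpow_sum {ι : Type*} (t : Finset ι) (q : ℝ) (hq : q ≠ 0) (m : ι → ℤ) :
    ∏ i ∈ t, q ^ m i = q ^ (∑ i ∈ t, m i) := by
  induction t using Finset.cons_induction with
  | empty => simp
  | cons a t ha ih => rw [Finset.prod_cons, Finset.sum_cons, zpow_add₀ hq, ih]

/-- Minkowski-type lemma for admissible lattices: if `L ⊂ ℝ^{s+1}` has covolume `D`,
`|Nm γ| ≥ c^{s+1}` for all nonzero `γ ∈ L`, `∑ m_i = 0` and `q = 2 + ⌊D/c^{s+1}⌋`, then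
the box `∏_{i<s} [-q^{m_i}, q^{m_i}] × [-D q^{m_s}, D q^{m_s}]` contains a nonzero
`γ ∈ L` with `|Nm γ| ≤ D` and `|γ_i| > q^{m_i - 1}` for every `i < s`. -/
theorem minkowski_box_admissible
    (s : ℕ) (L : Submodule ℤ (EuclideanSpace ℝ (Fin (s + 1))))
    [DiscreteTopology L] [IsZLattice ℝ L]
    (c : ℝ) (hc : 0 < c)
    (hadm : ∀ γ ∈ L, γ ≠ 0 → c ^ (s + 1) ≤ |∏ i, γ i|)
    (D : ℝ) (hD : D = ZLattice.covolume L MeasureTheory.volume)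
    (m : Fin (s + 1) → ℤ) (hm : ∑ i, m i = 0)
    (q : ℝ) (hq : q = 2 + (⌊D / c ^ (s + 1)⌋ : ℤ)) :
    ∃ γ : EuclideanSpace ℝ (Fin (s + 1)), γ ∈ L ∧ γ ≠ 0 ∧
      (∀ i : Fin s, |γ i.castSucc| ≤ q ^ (m i.castSucc)) ∧
      |γ (Fin.last s)| ≤ D * q ^ (m (Fin.last s)) ∧
      |∏ i, γ i| ≤ D ∧
      ∀ i : Fin s, q ^ (m i.castSucc - 1) < |γ i.castSucc| := by
  -- basic positivity facts
  have hDpos : 0 < D := hD ▸ ZLattice.covolume_pos L volume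
  have hcs : 0 < c ^ (s + 1) := pow_pos hc _
  have hq2 : (2 : ℝ) ≤ q := by
    have h0 : (0 : ℤ) ≤ ⌊D / c ^ (s + 1)⌋ := Int.floor_nonneg.mpr (by positivity)
    rw [hq]
    have : (0:ℝ) ≤ (⌊D / c ^ (s + 1)⌋ : ℤ) := by exact_mod_cast h0
    linarith
  have hqpos : (0 : ℝ) < q := by linarith
  have hqne : q ≠ 0 := ne_of_gt hqpos
  have hDq : D / q < c ^ (s + 1) := by
    have h1 : D / c ^ (s + 1) < q := by
      rw [hq]
      have := Int.lt_floor_add_one (D / c ^ (s + 1))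
      linarith
    rw [div_lt_iff₀ hqpos]
    rw [div_lt_iff₀ hcs] at h1
    linarith [mul_comm q (c ^ (s+1))]
  -- the box
  set a : Fin (s + 1) → ℝ := fun j => (if j = Fin.last s then D else 1) * q ^ m j with ha
  have hapos : ∀ j, 0 < a j := by
    intro j
    rw [ha]
    dsimp only
    split <;> [exact mul_pos hDpos (zpow_pos hqpos _); simpa using zpow_pos hqpos _]
  have hprod_zpow : ∏ j, q ^ m j = 1 := by
    rw [prod_zpow_sum _ q hqne, hm, zpow_zero]
  have hproda : ∏ j, a j = D := by
    rw [ha]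
    rw [Finset.prod_mul_distrib, hprod_zpow, mul_one, Finset.prod_ite_eq' Finset.univ (Fin.last s) (fun _ => D)]
    simp
  set S : Set (EuclideanSpace ℝ (Fin (s + 1))) :=
    (MeasurableEquiv.toLp 2 (Fin (s + 1) → ℝ)).symm ⁻¹' Set.univ.pi (fun j => Set.Icc (-(a j)) (a j)) with hS
  -- Minkowski
  have hconv : Convex ℝ S :=
    (convex_pi (fun j _ => convex_Icc _ _)).linear_preimage
      (PiLp.continuousLinearEquiv 2 ℝ (fun _ : Fin (s + 1) => ℝ)).toLinearMap
  have hcpt : IsCompact S :=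
    (PiLp.continuousLinearEquiv 2 ℝ (fun _ : Fin (s + 1) => ℝ)).toHomeomorph.isCompact_preimage.mpr
      (isCompact_univ_pi (fun j => isCompact_Icc))
  have hsymm : ∀ x ∈ S, -x ∈ S := by
    intro x hx j _
    have := hx j (Set.mem_univ j)
    simp only [Set.mem_Icc, MeasurableEquiv.coe_toLp_symm, WithLp.ofLp_neg, Pi.neg_apply] at this ⊢
    constructor <;> [linarith [this.2]; linarith [this.1]]
  -- volume of the box
  have hvolS : volume S = ENNReal.ofReal (2 ^ (s + 1) * D) := by
    have hpre : S = (MeasurableEquiv.toLp 2 (Fin (s + 1) → ℝ)).symm ⁻¹'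
        (Set.univ.pi (fun j => Set.Icc (-(a j)) (a j))) := rfl
    rw [hpre, (EuclideanSpace.volume_preserving_symm_measurableEquiv_toLp (Fin (s + 1))).measure_preimage
      (MeasurableSet.univ_pi (fun j => measurableSet_Icc)).nullMeasurableSet,
      volume_pi_pi]
    simp_rw [Real.volume_Icc]
    rw [← ENNReal.ofReal_prod_of_nonneg (fun j _ => by linarith [hapos j])]
    congr 1
    have : ∀ j, a j - -(a j) = 2 * a j := fun j => by ring
    simp_rw [this]
    rw [Finset.prod_mul_distrib, hproda, Finset.prod_const]
    simp [pow_succ]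
  -- fundamental domain
  let b := Module.Free.chooseBasis ℤ L
  have fund := ZLattice.isAddFundamentalDomain b (volume : Measure (EuclideanSpace ℝ (Fin (s + 1))))
  have hFvol : volume (ZSpan.fundamentalDomain (b.ofZLatticeBasis ℝ)) = ENNReal.ofReal D := by
    have hfin : volume (ZSpan.fundamentalDomain (b.ofZLatticeBasis ℝ)) ≠ ⊤ :=
      ((ZSpan.fundamentalDomain_isBounded (b.ofZLatticeBasis ℝ)).measure_lt_top).ne
    have := ZLattice.covolume_eq_measure_fundamentalDomain L volume fund
    rw [← hD] at this
    rw [this, measureReal_def, ENNReal.ofReal_toReal hfin]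
  have key : volume (ZSpan.fundamentalDomain (b.ofZLatticeBasis ℝ)) *
      2 ^ Module.finrank ℝ (EuclideanSpace ℝ (Fin (s + 1))) ≤ volume S := by
    rw [hFvol, hvolS, finrank_euclideanSpace_fin]
    rw [ENNReal.ofReal_mul (by positivity)]
    rw [mul_comm]
    gcongr
    rw [ENNReal.ofReal_pow (by norm_num : (0:ℝ) ≤ 2), ENNReal.ofReal_ofNat]
  have hCnt : Countable L.toAddSubgroup := inferInstanceAs (Countable L)
  have hDisc : DiscreteTopology L.toAddSubgroup := inferInstanceAs (DiscreteTopology L)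
  obtain ⟨x, hx0, hxS⟩ :=
    exists_ne_zero_mem_lattice_of_measure_mul_two_pow_le_measure (L := L.toAddSubgroup)
      fund hsymm hconv hcpt key
  set γ : EuclideanSpace ℝ (Fin (s + 1)) := (x : EuclideanSpace ℝ (Fin (s + 1))) with hγ
  have hγL : γ ∈ L := x.2
  have hγ0 : γ ≠ 0 := fun h => hx0 (Subtype.ext h)
  have habs : ∀ j, |γ j| ≤ a j := by
    intro j
    have := hxS j (Set.mem_univ j)
    rw [Set.mem_Icc] at this
    exact abs_le.mpr this
  have hNm : |∏ i, γ i| ≤ D := by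
    rw [Finset.abs_prod, ← hproda]
    exact Finset.prod_le_prod (fun j _ => abs_nonneg _) (fun j _ => habs j)
  have halast : a (Fin.last s) = D * q ^ m (Fin.last s) := by simp [ha]
  have hacast : ∀ i : Fin s, a i.castSucc = q ^ m i.castSucc := by
    intro i
    rw [ha]
    simp [(Fin.castSucc_lt_last i).ne]
  refine ⟨γ, hγL, hγ0, fun i => (hacast i) ▸ habs i.castSucc, halast ▸ habs (Fin.last s), hNm, ?_⟩
  intro i
  by_contra hcon
  push_neg at hcon
  -- derive |Nm γ| ≤ D / q < c^(s+1), contradiction with admissibility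
  have hNm' : |∏ j, γ j| ≤ D / q := by
    rw [Finset.abs_prod]
    calc ∏ j, |γ j| ≤ ∏ j, ((if j = i.castSucc then q⁻¹ else 1) * a j) := by
          refine Finset.prod_le_prod (fun j _ => abs_nonneg _) (fun j _ => ?_)
          by_cases hji : j = i.castSucc
          · subst hji
            rw [if_pos rfl, hacast i, ← zpow_neg_one, ← zpow_add₀ hqne]
            rw [show (-1 : ℤ) + m i.castSucc = m i.castSucc - 1 by ring]
            exact hcon
          · rw [if_neg hji, one_mul]; exact habs j
      _ = D / q := by
          rw [Finset.prod_mul_distrib, hproda,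
            Finset.prod_ite_eq' Finset.univ i.castSucc (fun _ => q⁻¹)]
          simp [div_eq_inv_mul, mul_comm]
  exact absurd (hadm γ hγL hγ0) (by linarith)
end
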